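/- The ordinary x-derivative of the q-Hermite polynomial satisfies x ∂_x H_n^{(q,1)}(x,y) = n H_n^{(q,1)}(x,y) - 2y [n]_q [n-1]_q H_{n-2}^{(q,1)}(x,y) for n ≥ 2. -/

import Mathlib

/-- The q-factorial `[n]_q! = ∏_{r=1}^n (1-q^r)/(1-q)`. -/
noncomputable def qFactorial (q : ℝ) (n : ℕ) : ℝ :=
  ∏ r ∈ Finset.Icc 1 n, (1 - q ^ r) / (1 - q)

/-- The two-variable q-Hermite polynomials `H_n^{(q,1)}(x,y)`. -/
noncomputable def qHermite (q : ℝ) (n : ℕ) (x y : ℝ) : ℝ :=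
  ∑ r ∈ Finset.range (n / 2 + 1),
    qFactorial q n * y ^ r * x ^ (n - 2 * r) / (qFactorial q (n - 2 * r) * r.factorial)

lemma qFactorial_pos {q : ℝ} (hq0 : 0 < q) (hq1 : q < 1) (k : ℕ) :
    0 < qFactorial q k := by
  apply Finset.prod_pos
  intro r hr
  have hr1 : 1 ≤ r := (Finset.mem_Icc.mp hr).1
  have : q ^ r < 1 := pow_lt_one₀ hq0.le hq1 (by omega)
  have h1 : 0 < 1 - q := by linarith
  exact div_pos (by linarith) h1

lemma qFactorial_succ (q : ℝ) (n : ℕ) :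
    qFactorial q (n + 1) = qFactorial q n * ((1 - q ^ (n + 1)) / (1 - q)) := by
  unfold qFactorial
  exact Finset.prod_Icc_succ_top (by omega) _

theorem qHermite_x_derivative (q : ℝ) (hq0 : 0 < q) (hq1 : q < 1)
    (n : ℕ) (hn : 2 ≤ n) (x y : ℝ) :
    x * deriv (fun t : ℝ => qHermite q n t y) x
      = (n : ℝ) * qHermite q n x y
        - 2 * y * ((1 - q ^ n) / (1 - q)) * ((1 - q ^ (n - 1)) / (1 - q)) *
            qHermite q (n - 2) x y := by
  obtain ⟨m, rfl⟩ : ∃ m, n = m + 2 := ⟨n - 2, by omega⟩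
  have hq : (1 : ℝ) - q ≠ 0 := by linarith
  -- derivative of the sum
  have hderiv : HasDerivAt (fun t : ℝ => qHermite q (m + 2) t y)
      (∑ r ∈ Finset.range ((m + 2) / 2 + 1),
        qFactorial q (m + 2) * y ^ r * (((m + 2 - 2 * r : ℕ) : ℝ) * x ^ (m + 2 - 2 * r - 1))
          / (qFactorial q (m + 2 - 2 * r) * r.factorial)) x := by
    unfold qHermite
    exact HasDerivAt.fun_sum fun r _ =>
      ((hasDerivAt_pow _ x).const_mul (qFactorial q (m + 2) * y ^ r)).div_const _
  rw [hderiv.deriv, Finset.mul_sum]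
  -- pull x into each term
  have hx : ∀ r ∈ Finset.range ((m + 2) / 2 + 1),
      x * (qFactorial q (m + 2) * y ^ r * (((m + 2 - 2 * r : ℕ) : ℝ) * x ^ (m + 2 - 2 * r - 1))
          / (qFactorial q (m + 2 - 2 * r) * r.factorial))
        = ((m + 2 - 2 * r : ℕ) : ℝ) *
          (qFactorial q (m + 2) * y ^ r * x ^ (m + 2 - 2 * r)
            / (qFactorial q (m + 2 - 2 * r) * r.factorial)) := by
    intro r _
    rcases h : m + 2 - 2 * r with _ | j
    · simp
    · simp only [Nat.add_sub_cancel]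
      push_cast
      ring
  rw [Finset.sum_congr rfl hx]
  -- split the coefficient
  have hsplit : ∀ r ∈ Finset.range ((m + 2) / 2 + 1),
      ((m + 2 - 2 * r : ℕ) : ℝ) *
          (qFactorial q (m + 2) * y ^ r * x ^ (m + 2 - 2 * r)
            / (qFactorial q (m + 2 - 2 * r) * r.factorial))
        = ((m + 2 : ℕ) : ℝ) *
            (qFactorial q (m + 2) * y ^ r * x ^ (m + 2 - 2 * r)
              / (qFactorial q (m + 2 - 2 * r) * r.factorial))
          - 2 * ((r : ℝ) *
            (qFactorial q (m + 2) * y ^ r * x ^ (m + 2 - 2 * r)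
              / (qFactorial q (m + 2 - 2 * r) * r.factorial))) := by
    intro r hr
    have h2r : 2 * r ≤ m + 2 := by
      have := Finset.mem_range.mp hr; omega
    have : ((m + 2 - 2 * r : ℕ) : ℝ) = ((m + 2 : ℕ) : ℝ) - 2 * r := by
      push_cast [Nat.cast_sub h2r]; ring
    rw [this]; ring
  rw [Finset.sum_congr rfl hsplit, Finset.sum_sub_distrib, ← Finset.mul_sum, ← Finset.mul_sum]
  -- identify the reindexed sum with the lower Hermite polynomial
  have key : ∑ r ∈ Finset.range ((m + 2) / 2 + 1),
      (r : ℝ) * (qFactorial q (m + 2) * y ^ r * x ^ (m + 2 - 2 * r)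
        / (qFactorial q (m + 2 - 2 * r) * r.factorial))
      = y * ((1 - q ^ (m + 2)) / (1 - q)) * ((1 - q ^ (m + 1)) / (1 - q)) *
          qHermite q m x y := by
    have hM : (m + 2) / 2 + 1 = (m / 2 + 1) + 1 := by omega
    rw [hM, Finset.sum_range_succ']
    simp only [Nat.cast_zero, zero_mul, add_zero]
    unfold qHermite
    rw [Finset.mul_sum]
    apply Finset.sum_congr rfl
    intro i hi
    have h2i : 2 * i ≤ m := by
      have := Finset.mem_range.mp hi
      omega
    have hk : m + 2 - 2 * (i + 1) = m - 2 * i := by omega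
    have hfac : qFactorial q (m + 2)
        = qFactorial q m * ((1 - q ^ (m + 1)) / (1 - q)) * ((1 - q ^ (m + 2)) / (1 - q)) := by
      rw [show m + 2 = (m + 1) + 1 from rfl, qFactorial_succ, qFactorial_succ]
    rw [hk, hfac, Nat.factorial_succ]
    have hG : qFactorial q (m - 2 * i) ≠ 0 := (qFactorial_pos hq0 hq1 _).ne'
    have hif : ((i.factorial : ℝ)) ≠ 0 := Nat.cast_ne_zero.mpr i.factorial_ne_zero
    have hi1 : ((i : ℝ) + 1) ≠ 0 := by positivity
    push_cast
    field_simp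
    ring
  rw [key]
  have hm2 : m + 2 - 2 = m := by omega
  have h1 : m + 2 - 1 = m + 1 := by omega
  rw [hm2, h1,
    show qHermite q (m + 2) x y = ∑ r ∈ Finset.range ((m + 2) / 2 + 1),
      qFactorial q (m + 2) * y ^ r * x ^ (m + 2 - 2 * r)
        / (qFactorial q (m + 2 - 2 * r) * r.factorial) from rfl]
  push_cast
  ring
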